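/- Let F be a finite field, let 1 ≤ k < n, and let G be a k×n minimal-basic polynomial generator matrix of a convolutional code C with degree δ = 2k. Suppose C is an MDS convolutional code, i.e. d_free(C) attains the generalized Singleton bound: d_free(C) = (n−k)·(⌊2k/k⌋ + 1) + 2k + 1 (= 3n − k + 1). Then T_{dfree}(C) ≤ 6nk − 2k² + 1; equivalently, every pair (u,j) determining an element of S_{dfree} satisfies j ≤ 6nk − 2k². -/

import Mathlib

open Polynomial Matrix

/-- The encoding map of a convolutional code with polynomial generator matrix `G`:
an information sequence `u ∈ F[[z]]^b` is mapped to the codeword `u · G ∈ F[[z]]^c`. -/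
noncomputable def encode {F : Type*} [Field F] {b c : ℕ}
    (G : Matrix (Fin b) (Fin c) (Polynomial F)) (u : Fin b → PowerSeries F) :
    Fin c → PowerSeries F :=
  fun j => ∑ i, u i * (G i j : PowerSeries F)

/-- Hamming weight of `v ∈ F[[z]]^c`: the extended-natural-number cardinality of the
set of pairs `(l, t)` such that `coeff_t (v_l) ≠ 0`. -/
noncomputable def wH {F : Type*} [Field F] {c : ℕ} (v : Fin c → PowerSeries F) : ℕ∞ :=
  {p : Fin c × ℕ | PowerSeries.coeff (R := F) p.2 (v p.1) ≠ 0}.encard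

/-- Free distance of the convolutional code generated by `G`. -/
noncomputable def dfree {F : Type*} [Field F] {b c : ℕ}
    (G : Matrix (Fin b) (Fin c) (Polynomial F)) : ℕ∞ :=
  sInf {w : ℕ∞ | ∃ v : Fin c → PowerSeries F,
    (∃ u : Fin b → PowerSeries F, v = encode G u) ∧ v ≠ 0 ∧ w = wH v}

/-- Total Hamming weight of segments `0, …, j-1` of `v`. -/
noncomputable def truncWeight {F : Type*} [Field F] {c : ℕ}
    (v : Fin c → PowerSeries F) (j : ℕ) : ℕ∞ :=
  {p : Fin c × ℕ | p.2 < j ∧ PowerSeries.coeff (R := F) p.2 (v p.1) ≠ 0}.encard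

/-- `i`-th row degree of `G`: the maximum of the natural degrees of the entries of row `i`. -/
def rowDeg {F : Type*} [Field F] {b c : ℕ}
    (G : Matrix (Fin b) (Fin c) (Polynomial F)) (i : Fin b) : ℕ :=
  Finset.univ.sup fun j => (G i j).natDegree

/-- Degree `δ` of `G`: the sum of its row degrees. -/
def degG {F : Type*} [Field F] {b c : ℕ}
    (G : Matrix (Fin b) (Fin c) (Polynomial F)) : ℕ :=
  ∑ i, rowDeg G i

/-- The controller-canonical encoder state `σ_t(u)` of `G` is nonzero: some component
`coeff_{t-s} (u_i)` with `1 ≤ s ≤ ν_i` (and `s ≤ t`, since coefficients with negative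
index are taken to be `0`) is nonzero. -/
def stateNonzero {F : Type*} [Field F] {b c : ℕ}
    (G : Matrix (Fin b) (Fin c) (Polynomial F)) (u : Fin b → PowerSeries F) (t : ℕ) : Prop :=
  ∃ i : Fin b, ∃ s : ℕ, 1 ≤ s ∧ s ≤ rowDeg G i ∧ s ≤ t ∧
    PowerSeries.coeff (R := F) (t - s) (u i) ≠ 0

/-- `G` is a generator matrix: it has rank `b` over the field of rational functions `F(z)`. -/
def IsGenerator {F : Type*} [Field F] {b c : ℕ}
    (G : Matrix (Fin b) (Fin c) (Polynomial F)) : Prop :=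
  (G.map (algebraMap (Polynomial F) (RatFunc F))).rank = b

/-- `G` is basic: it has a polynomial right inverse. -/
def IsBasic {F : Type*} [Field F] {b c : ℕ}
    (G : Matrix (Fin b) (Fin c) (Polynomial F)) : Prop :=
  ∃ H : Matrix (Fin c) (Fin b) (Polynomial F), G * H = 1

/-- The high-order coefficient matrix `[G]_h` of `G`. -/
def highOrder {F : Type*} [Field F] {b c : ℕ}
    (G : Matrix (Fin b) (Fin c) (Polynomial F)) : Matrix (Fin b) (Fin c) F :=
  fun i j => (G i j).coeff (rowDeg G i)

/-- `G` is minimal-basic: basic, and `[G]_h` has full row rank `b` over `F`. -/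
def IsMinimalBasic {F : Type*} [Field F] {b c : ℕ}
    (G : Matrix (Fin b) (Fin c) (Polynomial F)) : Prop :=
  IsBasic G ∧ (highOrder G).rank = b

/-- `(u, j)` determines an element of `S_{dfree}`: `j > 0`, the total Hamming weight of
segments `0, …, j-1` of `u·G` is strictly less than `d_free`, and `σ_t(u) ≠ 0` for all
`1 ≤ t ≤ j`. -/
def SdfreePair {F : Type*} [Field F] {b c : ℕ}
    (G : Matrix (Fin b) (Fin c) (Polynomial F)) (u : Fin b → PowerSeries F) (j : ℕ) : Prop :=
  0 < j ∧ truncWeight (encode G u) j < dfree G ∧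
    ∀ t : ℕ, 1 ≤ t → t ≤ j → stateNonzero G u t



lemma vecMul_ne_zero_of_rank {F : Type*} [Field F] {k n : ℕ}
    (M : Matrix (Fin k) (Fin n) F) (hM : M.rank = k) {y : Fin k → F} (hy : y ≠ 0) :
    Matrix.vecMul y M ≠ 0 := by
  have ht : Mᵀ.rank = k := by rw [Matrix.rank_transpose]; exact hM
  have hker : LinearMap.ker Mᵀ.mulVecLin = ⊥ := by
    have h1 := LinearMap.finrank_range_add_finrank_ker (Mᵀ.mulVecLin)
    rw [show Module.finrank F (↥(LinearMap.range Mᵀ.mulVecLin)) = Mᵀ.rank from rfl, ht,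
      Module.finrank_pi] at h1
    simp only [Fintype.card_fin] at h1
    have : Module.finrank F (↥(LinearMap.ker Mᵀ.mulVecLin)) = 0 := by omega
    exact Submodule.finrank_eq_zero.mp this
  intro h0
  apply hy
  have hv : Mᵀ.mulVecLin y = 0 := by
    rw [Matrix.mulVecLin_apply, Matrix.mulVec_transpose, h0]
  exact LinearMap.ker_eq_bot.mp hker (by simpa using hv)

lemma natDegree_le_rowDeg {F : Type*} [Field F] {b c : ℕ}
    (G : Matrix (Fin b) (Fin c) (Polynomial F)) (i : Fin b) (j : Fin c) :
    (G i j).natDegree ≤ rowDeg G i :=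
  Finset.le_sup (f := fun j => (G i j).natDegree) (Finset.mem_univ j)

lemma pdp {F : Type*} [Field F] {k n : ℕ}
    (G : Matrix (Fin k) (Fin n) (Polynomial F)) (hrank : (highOrder G).rank = k)
    (p : Fin k → Polynomial F) (i₀ : Fin k) (hp : p i₀ ≠ 0) :
    ∃ (jj : Fin n) (D : ℕ), (p i₀).natDegree + rowDeg G i₀ ≤ D ∧
      (∑ i, p i * G i jj).coeff D ≠ 0 := by
  classical
  set S : Finset (Fin k) := Finset.univ.filter (fun i => p i ≠ 0) with hS
  have hi₀S : i₀ ∈ S := by simp [hS, hp]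
  set D : ℕ := S.sup (fun i => (p i).natDegree + rowDeg G i) with hD
  have hle : (p i₀).natDegree + rowDeg G i₀ ≤ D := by
    rw [hD]; exact Finset.le_sup (f := fun i => (p i).natDegree + rowDeg G i) hi₀S
  -- the coefficient vector
  set y : Fin k → F := fun i => if (p i).natDegree + rowDeg G i = D then (p i).leadingCoeff else 0
    with hy
  have hyne : y ≠ 0 := by
    obtain ⟨i₁, hi₁, hsup⟩ := Finset.exists_mem_eq_sup S ⟨i₀, hi₀S⟩
      (fun i => (p i).natDegree + rowDeg G i)
    intro h
    have : y i₁ = 0 := congrFun h i₁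
    rw [hy] at this
    simp only [hsup.symm, ← hD, ↓reduceIte] at this
    exact (Polynomial.leadingCoeff_ne_zero.mpr (by simpa [hS] using hi₁)) this
  have hcoeff : ∀ jj : Fin n, (∑ i, p i * G i jj).coeff D = Matrix.vecMul y (highOrder G) jj := by
    intro jj
    rw [Polynomial.finset_sum_coeff]
    rw [Matrix.vecMul]
    simp only [dotProduct]
    apply Finset.sum_congr rfl
    intro i _
    rw [Polynomial.coeff_mul]
    by_cases hcase : (p i).natDegree + rowDeg G i = D
    · -- single surviving term ((p i).natDegree, rowDeg G i)
      rw [Finset.sum_eq_single ((p i).natDegree, rowDeg G i)]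
      · rw [hy]
        simp only [if_pos hcase]
        rfl
      · rintro ⟨a, b⟩ hab hne
        rw [Finset.HasAntidiagonal.mem_antidiagonal] at hab
        rcases lt_or_ge (p i).natDegree a with h' | h'
        · rw [Polynomial.coeff_eq_zero_of_natDegree_lt h', zero_mul]
        · have hb : rowDeg G i < b := by
            rcases lt_or_eq_of_le h' with h'' | h''
            · omega
            · exfalso; apply hne; simp only [Prod.mk.injEq]; omega
          rw [Polynomial.coeff_eq_zero_of_natDegree_lt (lt_of_le_of_lt (natDegree_le_rowDeg G i jj) hb), mul_zero]
      · intro hmem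
        exfalso; apply hmem; rw [Finset.HasAntidiagonal.mem_antidiagonal]; exact hcase
    · -- all terms vanish
      have hyi : y i = 0 := by rw [hy]; simp [hcase]
      rw [hyi, zero_mul]
      apply Finset.sum_eq_zero
      rintro ⟨a, b⟩ hab
      rw [Finset.HasAntidiagonal.mem_antidiagonal] at hab
      by_cases hpi : p i = 0
      · simp only [hpi, Polynomial.coeff_zero, zero_mul]
      · have hDge : (p i).natDegree + rowDeg G i ≤ D := Finset.le_sup (f := fun i => (p i).natDegree + rowDeg G i) (by simp [hS, hpi]) |>.trans_eq hD.symm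
        have hlt : (p i).natDegree + rowDeg G i < D := lt_of_le_of_ne hDge hcase
        rcases lt_or_ge (p i).natDegree a with h' | h'
        · rw [Polynomial.coeff_eq_zero_of_natDegree_lt h', zero_mul]
        · have hb : rowDeg G i < b := by omega
          rw [Polynomial.coeff_eq_zero_of_natDegree_lt (lt_of_le_of_lt (natDegree_le_rowDeg G i jj) hb), mul_zero]
  have := vecMul_ne_zero_of_rank (highOrder G) hrank hyne
  obtain ⟨jj, hjj⟩ : ∃ jj, Matrix.vecMul y (highOrder G) jj ≠ 0 := by
    by_contra hall
    push_neg at hall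
    exact this (funext hall)
  exact ⟨jj, D, hle, by rw [hcoeff jj]; exact hjj⟩

section SM
variable {F : Type*} [Field F] {k n : ℕ} (G : Matrix (Fin k) (Fin n) (Polynomial F))

abbrev Sig := ∀ i : Fin k, Fin (rowDeg G i) → F

noncomputable def outL : (Sig G × (Fin k → F)) →ₗ[F] (Fin n → F) where
  toFun p := fun j => ∑ i, (p.2 i * (G i j).coeff 0 +
    ∑ s : Fin (rowDeg G i), p.1 i s * (G i j).coeff ((s : ℕ) + 1))
  map_add' p q := by
    funext j
    simp only [Prod.fst_add, Prod.snd_add, Pi.add_apply, add_mul, Finset.sum_add_distrib]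
    ring
  map_smul' r p := by
    funext j
    dsimp only [RingHom.id_apply]
    simp only [Prod.smul_fst, Prod.smul_snd, Pi.smul_apply, smul_eq_mul]
    rw [Finset.mul_sum]
    apply Finset.sum_congr rfl
    intro i _
    rw [mul_add, Finset.mul_sum]
    congr 1
    · ring
    · exact Finset.sum_congr rfl fun s _ => by ring

noncomputable def nextL : (Sig G × (Fin k → F)) →ₗ[F] Sig G where
  toFun p := fun i s => if h : (s : ℕ) = 0 then p.2 i
    else p.1 i ⟨(s : ℕ) - 1, by have := s.isLt; omega⟩
  map_add' p q := by
    funext i s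
    by_cases h : (s : ℕ) = 0 <;> simp [h]
  map_smul' r p := by
    funext i s
    by_cases h : (s : ℕ) = 0 <;> simp [h]

noncomputable def stateOf (u : Fin k → PowerSeries F) (a : ℕ) : Sig G :=
  fun i s => if (s : ℕ) + 1 ≤ a then PowerSeries.coeff (R := F) (a - 1 - (s : ℕ)) (u i) else 0

lemma stateOf_succ (u : Fin k → PowerSeries F) (a : ℕ) :
    stateOf G u (a + 1) = nextL G (stateOf G u a, fun i => PowerSeries.coeff (R := F) a (u i)) := by
  funext i s
  simp only [stateOf, nextL, LinearMap.coe_mk, AddHom.coe_mk]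
  by_cases h : (s : ℕ) = 0
  · have h1 : (s : ℕ) + 1 ≤ a + 1 := by omega
    have h2 : a + 1 - 1 - (s : ℕ) = a := by omega
    rw [dif_pos h, if_pos h1, h2]
  · rw [dif_neg h]
    by_cases h2 : (s : ℕ) + 1 ≤ a + 1
    · have h4 : a + 1 - 1 - (s : ℕ) = a - 1 - ((s : ℕ) - 1) := by omega
      rw [if_pos h2, if_pos (by omega), h4]
    · rw [if_neg h2, if_neg (by omega)]

lemma coeff_encode_eq_out (u : Fin k → PowerSeries F) (T : ℕ) (j : Fin n) :
    PowerSeries.coeff (R := F) T (encode G u j) =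
      outL G (stateOf G u T, fun i => PowerSeries.coeff (R := F) T (u i)) j := by
  simp only [encode, outL, LinearMap.coe_mk, AddHom.coe_mk, map_sum]
  apply Finset.sum_congr rfl
  intro i _
  set g := G i j with hg
  set ν := rowDeg G i with hν
  have hgd : ∀ b, ν < b → g.coeff b = 0 := fun b hb =>
    Polynomial.coeff_eq_zero_of_natDegree_lt (lt_of_le_of_lt (natDegree_le_rowDeg G i j) hb)
  set f : ℕ → F := fun b => (if b ≤ T then PowerSeries.coeff (R := F) (T - b) (u i) else 0) * g.coeff b
    with hf
  have lhs_eq : PowerSeries.coeff (R := F) T (u i * (g : PowerSeries F)) =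
      ∑ b ∈ Finset.range (T + ν + 1), f b := by
    rw [PowerSeries.coeff_mul]
    calc ∑ p ∈ Finset.HasAntidiagonal.antidiagonal T, PowerSeries.coeff (R := F) p.1 (u i) *
            PowerSeries.coeff (R := F) p.2 (g : PowerSeries F)
        = ∑ c ∈ Finset.range (T + 1), PowerSeries.coeff (R := F) c (u i) *
            PowerSeries.coeff (R := F) (T - c) (g : PowerSeries F) := by
          rw [Finset.Nat.sum_antidiagonal_eq_sum_range_succ
            (f := fun a b => PowerSeries.coeff (R := F) a (u i) * PowerSeries.coeff (R := F) b (g : PowerSeries F))]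
      _ = ∑ b ∈ Finset.range (T + 1), PowerSeries.coeff (R := F) (T + 1 - 1 - b) (u i) *
            PowerSeries.coeff (R := F) (T - (T + 1 - 1 - b)) (g : PowerSeries F) :=
          (Finset.sum_range_reflect
            (fun c => PowerSeries.coeff (R := F) c (u i) *
              PowerSeries.coeff (R := F) (T - c) (g : PowerSeries F)) (T + 1)).symm
      _ = ∑ b ∈ Finset.range (T + 1), f b := by
          apply Finset.sum_congr rfl
          intro b hb
          rw [Finset.mem_range] at hb
          simp only [hf]
          rw [if_pos (by omega), Polynomial.coeff_coe]
          have e1 : T + 1 - 1 - b = T - b := by omega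
          rw [e1]
          have e2 : T - (T - b) = b := by omega
          rw [e2]
      _ = ∑ b ∈ Finset.range (T + ν + 1), f b := by
          apply Finset.sum_subset (Finset.range_subset_range.mpr (by omega))
          intro b _ hb
          rw [Finset.mem_range] at hb
          simp only [hf]
          rw [if_neg (by omega), zero_mul]
  have rhs_eq : (PowerSeries.coeff (R := F) T (u i)) * g.coeff 0 +
      ∑ s : Fin ν, (stateOf G u T i s) * g.coeff ((s : ℕ) + 1) =
      ∑ b ∈ Finset.range (T + ν + 1), f b := by
    have hfin : ∑ s : Fin ν, (stateOf G u T i s) * g.coeff ((s : ℕ) + 1) =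
        ∑ c ∈ Finset.range ν, f (c + 1) := by
      rw [← Fin.sum_univ_eq_sum_range (fun c => f (c + 1)) ν]
      apply Finset.sum_congr rfl
      intro s _
      simp only [stateOf, hf]
      by_cases h : (s : ℕ) + 1 ≤ T
      · rw [if_pos h, if_pos h]
        have e1 : T - 1 - (s : ℕ) = T - ((s : ℕ) + 1) := by omega
        rw [e1]
      · rw [if_neg h, if_neg h]
    rw [hfin]
    have h0 : (PowerSeries.coeff (R := F) T (u i)) * g.coeff 0 = f 0 := by
      simp only [hf]
      rw [if_pos (Nat.zero_le T), Nat.sub_zero]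
    rw [h0, add_comm, ← Finset.sum_range_succ' f ν]
    apply Finset.sum_subset (Finset.range_subset_range.mpr (by omega))
    intro b _ hb
    rw [Finset.mem_range] at hb
    simp only [hf]
    rw [hgd b (by omega), mul_zero]
  rw [lhs_eq, ← rhs_eq]

noncomputable def PStep (Q : Submodule F (Sig G)) : Submodule F (Sig G) :=
  Submodule.map (LinearMap.fst F (Sig G) (Fin k → F))
    ((LinearMap.ker (outL G)) ⊓ (Submodule.comap (nextL G) Q))

noncomputable def Pchain (L : ℕ) : Submodule F (Sig G) :=
  Nat.rec ⊤ (fun _ Q => PStep G Q) L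

lemma Pchain_succ (L : ℕ) : Pchain G (L + 1) = PStep G (Pchain G L) := rfl

lemma Pchain_antitone : ∀ L, Pchain G (L+1) ≤ Pchain G L := by
  intro L
  induction L with
  | zero => exact le_top
  | succ L ih =>
      exact Submodule.map_mono (inf_le_inf le_rfl (Submodule.comap_mono ih))

lemma finrank_Sig : Module.finrank F (Sig G) = ∑ i, rowDeg G i := by
  rw [Module.finrank_pi_fintype]
  apply Finset.sum_congr rfl
  intro i _
  rw [Module.finrank_pi]
  simp

lemma Pchain_stab : ∀ M, Module.finrank F (Sig G) ≤ M →
    Pchain G M = Pchain G (Module.finrank F (Sig G)) := by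
  set δ' := Module.finrank F (Sig G) with hδ'
  have hex : ∃ L ≤ δ', Pchain G L = Pchain G (L + 1) := by
    by_contra hc
    push_neg at hc
    have hstep : ∀ L, L ≤ δ' + 1 → Module.finrank F (Pchain G L) + L ≤ δ' := by
      intro L
      induction L with
      | zero =>
          intro _
          simpa using Submodule.finrank_le (Pchain G 0)
      | succ L ih =>
          intro hL
          have hlt : Pchain G (L + 1) < Pchain G L :=
            lt_of_le_of_ne (Pchain_antitone G L) (fun h => hc L (by omega) h.symm)
          have := Submodule.finrank_lt_finrank_of_lt hlt
          have := ih (by omega)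
          omega
    have := hstep (δ' + 1) le_rfl
    omega
  obtain ⟨L, hL, heq⟩ := hex
  have hstable : ∀ M, L ≤ M → Pchain G M = Pchain G L := by
    intro M hM
    induction M, hM using Nat.le_induction with
    | base => rfl
    | succ M hM ih =>
        rw [Pchain_succ, ih]
        exact heq.symm
  intro M hM
  rw [hstable M (le_trans hL hM), hstable δ' hL]

lemma Pchain_mem_step (σ : Sig G) (hσ : σ ∈ Pchain G (Module.finrank F (Sig G))) :
    ∃ x : Fin k → F, outL G (σ, x) = 0 ∧
      nextL G (σ, x) ∈ Pchain G (Module.finrank F (Sig G)) := by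
  set δ' := Module.finrank F (Sig G) with hδ'
  have h2 : σ ∈ Pchain G (δ' + 1) := by
    rw [Pchain_stab G (δ' + 1) (by omega)]
    exact hσ
  rw [Pchain_succ] at h2
  obtain ⟨p, hp, hfst⟩ := h2
  obtain ⟨hker, hcom⟩ := hp
  refine ⟨p.2, ?_, ?_⟩
  · have : p = (σ, p.2) := Prod.ext hfst rfl
    rw [← this]
    exact hker
  · have : p = (σ, p.2) := Prod.ext hfst rfl
    rw [← this]
    exact hcom

lemma stateOf_mem_Pchain (u : Fin k → PowerSeries F) : ∀ (L a : ℕ),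
    (∀ t, a ≤ t → t < a + L → ∀ j, PowerSeries.coeff (R := F) t (encode G u j) = 0) →
    stateOf G u a ∈ Pchain G L := by
  intro L
  induction L with
  | zero => intro a _; exact Submodule.mem_top
  | succ L ih =>
      intro a hz
      rw [Pchain_succ]
      refine ⟨(stateOf G u a, fun i => PowerSeries.coeff (R := F) a (u i)), ⟨?_, ?_⟩, rfl⟩
      · simp only [SetLike.mem_coe, LinearMap.mem_ker]
        funext j
        rw [← coeff_encode_eq_out]
        exact hz a le_rfl (by omega) j
      · simp only [SetLike.mem_coe, Submodule.mem_comap]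
        rw [← stateOf_succ]
        exact ih (a + 1) (fun t ht1 ht2 j => hz t (by omega) (by omega) j)

lemma mem_Pchain_eq_zero (hbasic : IsBasic G) (hrank : (highOrder G).rank = k)
    (σ : Sig G) (hσ : σ ∈ Pchain G (Module.finrank F (Sig G))) : σ = 0 := by
  classical
  by_contra hne
  set δ' := Module.finrank F (Sig G) with hδ'
  have hνle : ∀ i, rowDeg G i ≤ δ' := by
    intro i
    rw [hδ', finrank_Sig]
    exact Finset.single_le_sum (fun i _ => Nat.zero_le _) (Finset.mem_univ i)
  -- choice trajectory
  let xsel : (τ : {τ : Sig G // τ ∈ Pchain G δ'}) → (Fin k → F) :=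
    fun τ => (Pchain_mem_step G τ.1 τ.2).choose
  have hxsel1 : ∀ τ, outL G (τ.1, xsel τ) = 0 :=
    fun τ => (Pchain_mem_step G τ.1 τ.2).choose_spec.1
  have hxsel2 : ∀ τ, nextL G (τ.1, xsel τ) ∈ Pchain G δ' :=
    fun τ => (Pchain_mem_step G τ.1 τ.2).choose_spec.2
  let traj : ℕ → {τ : Sig G // τ ∈ Pchain G δ'} :=
    fun t => Nat.rec ⟨σ, hσ⟩ (fun _ p => ⟨nextL G (p.1, xsel p), hxsel2 p⟩) t
  set x : ℕ → Fin k → F := fun t => xsel (traj t) with hx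
  have htraj0 : (traj 0).1 = σ := rfl
  have htrajS : ∀ t, (traj (t + 1)).1 = nextL G ((traj t).1, x t) := fun t => rfl
  have hout : ∀ t, outL G ((traj t).1, x t) = 0 := fun t => hxsel1 (traj t)
  -- realization
  set uu : Fin k → PowerSeries F := fun i => PowerSeries.mk (fun r =>
    if r < δ' then (if h : δ' - 1 - r < rowDeg G i then σ i ⟨δ' - 1 - r, h⟩ else 0)
    else x (r - δ') i) with huu
  have hcoeffσ : ∀ (i : Fin k) (s : Fin (rowDeg G i)),
      PowerSeries.coeff (R := F) (δ' - 1 - (s : ℕ)) (uu i) = σ i s := by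
    intro i s
    have hs : (s : ℕ) < rowDeg G i := s.isLt
    have hν := hνle i
    rw [huu]
    simp only [PowerSeries.coeff_mk]
    rw [if_pos (by omega)]
    have hr : δ' - 1 - (δ' - 1 - (s : ℕ)) = (s : ℕ) := by omega
    simp only [hr]
    rw [dif_pos hs, Fin.eta]
  have R1 : stateOf G uu δ' = σ := by
    funext i s
    have hs : (s : ℕ) < rowDeg G i := s.isLt
    have hν := hνle i
    simp only [stateOf]
    rw [if_pos (by omega)]
    exact hcoeffσ i s
  have hxg : ∀ t, (fun i => PowerSeries.coeff (R := F) (δ' + t) (uu i)) = x t := by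
    intro t
    funext i
    rw [huu]
    simp only [PowerSeries.coeff_mk]
    rw [if_neg (by omega)]
    congr 1
    omega
  have R2 : ∀ t, stateOf G uu (δ' + t) = (traj t).1 := by
    intro t
    induction t with
    | zero => rw [Nat.add_zero, R1, htraj0]
    | succ t ih =>
        have he : δ' + (t + 1) = (δ' + t) + 1 := rfl
        rw [he, stateOf_succ, ih, hxg t, htrajS t]
  have R3 : ∀ t, δ' ≤ t → ∀ j, PowerSeries.coeff (R := F) t (encode G uu j) = 0 := by
    intro t ht j
    rw [coeff_encode_eq_out]
    have he : t = δ' + (t - δ') := by omega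
    rw [he, R2 (t - δ'), hxg (t - δ')]
    rw [hout (t - δ')]
    rfl
  -- polynomial extraction via basicness
  obtain ⟨H, hGH⟩ := hbasic
  set DH : ℕ := Finset.sup Finset.univ (fun q : Fin n × Fin k => (H q.1 q.2).natDegree) with hDH
  set N : ℕ := δ' + DH + 1 with hN
  have urec : ∀ i, (∑ j, encode G uu j * (H j i : PowerSeries F)) = uu i := by
    intro i
    simp only [encode, Finset.sum_mul]
    rw [Finset.sum_comm]
    have hinner : ∀ i', (∑ j, uu i' * (G i' j : PowerSeries F) * (H j i : PowerSeries F)) =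
        uu i' * (((1 : Matrix (Fin k) (Fin k) (Polynomial F)) i' i : Polynomial F) : PowerSeries F) := by
      intro i'
      rw [← hGH, Matrix.mul_apply]
      rw [show ((∑ j, G i' j * H j i : Polynomial F) : PowerSeries F) =
        ∑ j, (G i' j : PowerSeries F) * (H j i : PowerSeries F) from by
          rw [← Polynomial.coeToPowerSeries.ringHom_apply, map_sum]
          apply Finset.sum_congr rfl
          intro j _
          rw [_root_.map_mul]
          simp [Polynomial.coeToPowerSeries.ringHom_apply]]
      rw [Finset.mul_sum]
      apply Finset.sum_congr rfl
      intro j _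
      ring
    rw [Finset.sum_congr rfl (fun i' _ => hinner i')]
    rw [Finset.sum_eq_single i]
    · rw [Matrix.one_apply_eq]
      simp
    · intro i' _ hne'
      rw [Matrix.one_apply_ne hne']
      simp
    · intro h
      exact absurd (Finset.mem_univ i) h
  have hvanish : ∀ i r, N ≤ r → PowerSeries.coeff (R := F) r (uu i) = 0 := by
    intro i r hr
    rw [← urec i, map_sum]
    apply Finset.sum_eq_zero
    intro j _
    rw [PowerSeries.coeff_mul]
    apply Finset.sum_eq_zero
    rintro ⟨p, q⟩ hpq
    rw [Finset.HasAntidiagonal.mem_antidiagonal] at hpq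
    rcases le_or_gt δ' p with h | h
    · rw [R3 p h j, zero_mul]
    · have hq : (H j i).natDegree < q := by
        have hle : (H j i).natDegree ≤ DH :=
          Finset.le_sup (f := fun q : Fin n × Fin k => (H q.1 q.2).natDegree)
            (Finset.mem_univ (j, i))
        omega
      rw [Polynomial.coeff_coe, Polynomial.coeff_eq_zero_of_natDegree_lt hq, mul_zero]
  set pp : Fin k → Polynomial F := fun i => PowerSeries.trunc N (uu i) with hppdef
  have hpp : ∀ i, ((pp i : Polynomial F) : PowerSeries F) = uu i := by
    intro i
    ext r
    rw [Polynomial.coeff_coe, hppdef]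
    simp only [PowerSeries.coeff_trunc]
    split_ifs with h
    · rfl
    · rw [hvanish i r (by omega)]
  obtain ⟨i₀, s₀, hσne⟩ : ∃ (i : Fin k) (s : Fin (rowDeg G i)), σ i s ≠ 0 := by
    by_contra hc
    push_neg at hc
    exact hne (funext fun i => funext fun s => hc i s)
  have hppc : (pp i₀).coeff (δ' - 1 - (s₀ : ℕ)) = σ i₀ s₀ := by
    rw [← Polynomial.coeff_coe, hpp]
    exact hcoeffσ i₀ s₀
  have hppne : pp i₀ ≠ 0 := by
    intro h0
    rw [h0] at hppc
    simp at hppc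
    exact hσne hppc.symm
  obtain ⟨jj, D, hD, hne2⟩ := pdp G hrank pp i₀ hppne
  have hdeg : δ' - 1 - (s₀ : ℕ) ≤ (pp i₀).natDegree :=
    Polynomial.le_natDegree_of_ne_zero (by rw [hppc]; exact hσne)
  have hDδ : δ' ≤ D := by
    have hs := s₀.isLt
    have hν := hνle i₀
    omega
  apply hne2
  have hco : ((∑ i, pp i * G i jj : Polynomial F) : PowerSeries F) = encode G uu jj := by
    rw [← Polynomial.coeToPowerSeries.ringHom_apply, map_sum, encode]
    apply Finset.sum_congr rfl
    intro i _
    rw [_root_.map_mul]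
    simp only [Polynomial.coeToPowerSeries.ringHom_apply]
    rw [hpp]
  rw [← Polynomial.coeff_coe, hco]
  exact R3 D hDδ jj

lemma stateOf_ne_zero_of_stateNonzero (u : Fin k → PowerSeries F) (t : ℕ)
    (h : stateNonzero G u t) : stateOf G u t ≠ 0 := by
  obtain ⟨i, s, hs1, hs2, hst, hcoeff⟩ := h
  intro h0
  have hc := congrFun (congrFun h0 i) ⟨s - 1, by omega⟩
  simp only [stateOf, Pi.zero_apply] at hc
  rw [if_pos (show s - 1 + 1 ≤ t from by omega)] at hc
  apply hcoeff
  rw [show t - s = t - 1 - ((⟨s - 1, by omega⟩ : Fin (rowDeg G i)) : ℕ) from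
    show t - s = t - 1 - (s - 1) from by omega]
  exact hc

lemma window_lemma (hbasic : IsBasic G) (hrank : (highOrder G).rank = k)
    (u : Fin k → PowerSeries F) (a : ℕ) (hstate : stateOf G u a ≠ 0)
    (hz : ∀ t, a ≤ t → t < a + Module.finrank F (Sig G) →
      ∀ j, PowerSeries.coeff (R := F) t (encode G u j) = 0) : False :=
  hstate (mem_Pchain_eq_zero G hbasic hrank _ (stateOf_mem_Pchain G u _ a hz))

lemma coeff_zero_ne (hbasic : IsBasic G) (u : Fin k → PowerSeries F)
    (h : stateNonzero G u 1) : ∃ j, PowerSeries.coeff (R := F) 0 (encode G u j) ≠ 0 := by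
  obtain ⟨i, s, hs1, hs2, hst, hc⟩ := h
  have hs : s = 1 := le_antisymm hst hs1
  subst hs
  by_contra hall
  push_neg at hall
  set x : Fin k → F := fun i => PowerSeries.coeff (R := F) 0 (u i) with hxdef
  have h0 : ∀ jl : Fin n, ∑ i, x i * (G i jl).coeff 0 = 0 := by
    intro jl
    have := hall jl
    rw [coeff_encode_eq_out] at this
    simp only [outL, stateOf, LinearMap.coe_mk, AddHom.coe_mk] at this
    rw [← this]
    apply Finset.sum_congr rfl
    intro i' _
    have : ∀ s : Fin (rowDeg G i'),
        (if (s : ℕ) + 1 ≤ 0 then PowerSeries.coeff (R := F) (0 - 1 - (s : ℕ)) (u i') else 0) *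
          (G i' jl).coeff ((s : ℕ) + 1) = 0 := by
      intro s
      rw [if_neg (by omega), zero_mul]
    rw [Finset.sum_congr rfl (fun s _ => this s), Finset.sum_const_zero, add_zero]
  obtain ⟨H, hGH⟩ := hbasic
  set G0 : Matrix (Fin k) (Fin n) F := G.map (Polynomial.evalRingHom 0) with hG0
  set H0 : Matrix (Fin n) (Fin k) F := H.map (Polynomial.evalRingHom 0) with hH0
  have h1 : G0 * H0 = 1 := by
    rw [hG0, hH0, ← Matrix.map_mul, hGH]
    exact Matrix.map_one _ (map_zero _) (map_one _)
  have hx0 : Matrix.vecMul x G0 = 0 := by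
    funext jl
    simp only [Matrix.vecMul, dotProduct, Pi.zero_apply]
    rw [← h0 jl]
    apply Finset.sum_congr rfl
    intro i' _
    congr 1
    simp [hG0, Matrix.map_apply, Polynomial.coeff_zero_eq_eval_zero]
  have hxx : x = 0 := by
    have : Matrix.vecMul (Matrix.vecMul x G0) H0 = Matrix.vecMul x (G0 * H0) :=
      Matrix.vecMul_vecMul x G0 H0
    rw [hx0, h1, Matrix.vecMul_one, Matrix.zero_vecMul] at this
    exact this.symm
  apply hc
  have := congrFun hxx i
  simpa [hxdef] using this

end SM

/-- for a minimal-basic generator matrix of a `(n, k, δ = 2k)` MDS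
convolutional code (whose free distance attains the generalized Singleton bound),
`T_{dfree}(C) ≤ 6nk − 2k² + 1`; equivalently, every pair `(u, j)` determining an element
of `S_{dfree}` satisfies `j ≤ 6nk − 2k²`. -/
theorem Tdfree_le_of_MDS
    {F : Type*} [Field F] [Fintype F] {k n : ℕ} (hk : 1 ≤ k) (hkn : k < n)
    (G : Matrix (Fin k) (Fin n) (Polynomial F))
    (hGen : IsGenerator G) (hMB : IsMinimalBasic G) (hδ : degG G = 2 * k)
    (hMDS : dfree G = (((n - k) * (2 * k / k + 1) + 2 * k + 1 : ℕ) : ℕ∞)) :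
    ∀ (u : Fin k → PowerSeries F) (j : ℕ), 0 < j → SdfreePair G u j →
      j ≤ 6 * n * k - 2 * k ^ 2 := by
  classical
  intro u j hj hS
  obtain ⟨hj0, hWlt, hstates⟩ := hS
  obtain ⟨hbasic, hrank⟩ := hMB
  set δ := degG G with hδdef
  have hδfin : Module.finrank F (Sig G) = δ := by rw [finrank_Sig]; rfl
  have hδ2k : δ = 2 * k := hδ
  have hδpos : 0 < δ := by omega
  set W : ℕ := (n - k) * 3 + 2 * k with hWdef
  have hdfree : dfree G = ((W + 1 : ℕ) : ℕ∞) := by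
    have h2 : 2 * k / k = 2 := Nat.mul_div_cancel 2 (by omega)
    have h3 : (n - k) * (2 * k / k + 1) + 2 * k + 1 = W + 1 := by
      rw [h2]
    rw [hMDS, h3]
  have hWbound : truncWeight (encode G u) j < ((W + 1 : ℕ) : ℕ∞) := hdfree ▸ hWlt
  set T : Set ℕ := {t | t < j ∧ ∃ l, PowerSeries.coeff (R := F) t (encode G u l) ≠ 0} with hTdef
  -- cardinality bound for finite subsets of T
  have hcardT : ∀ S : Finset ℕ, ↑S ⊆ T → S.card ≤ W := by
    intro S hsub
    have hnn : 0 < n := by omega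
    set f : ℕ → Fin n × ℕ := fun t =>
      if h : ∃ l, PowerSeries.coeff (R := F) t (encode G u l) ≠ 0 then (h.choose, t)
      else (⟨0, hnn⟩, t) with hfdef
    have hinj : Function.Injective f := by
      intro a b hab
      have : (f a).2 = (f b).2 := by rw [hab]
      simpa [hfdef, apply_dite (fun p : Fin n × ℕ => p.2)] using this
    have himg : f '' ↑S ⊆ {p : Fin n × ℕ | p.2 < j ∧
        PowerSeries.coeff (R := F) p.2 (encode G u p.1) ≠ 0} := by
      rintro p ⟨t, htS, rfl⟩
      obtain ⟨htj, hex⟩ := hsub htS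
      rw [hfdef]
      simp only [dif_pos hex]
      exact ⟨htj, hex.choose_spec⟩
    have h1 : ((S.card : ℕ) : ℕ∞) = (↑S : Set ℕ).encard :=
      (Set.encard_coe_eq_coe_finsetCard S).symm
    have h2 : (↑S : Set ℕ).encard = (f '' ↑S).encard :=
      ((hinj.injOn).encard_image).symm
    have h3 : (f '' ↑S).encard ≤ truncWeight (encode G u) j := Set.encard_le_encard himg
    have : ((S.card : ℕ) : ℕ∞) < ((W + 1 : ℕ) : ℕ∞) := by
      rw [h1, h2]
      exact lt_of_le_of_lt h3 hWbound
    have := Nat.cast_lt.mp this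
    omega
  have h0T : 0 ∈ T := by
    refine ⟨hj0, ?_⟩
    exact coeff_zero_ne G hbasic u (hstates 1 le_rfl hj0)
  have hwin : ∀ a, 1 ≤ a → a + δ ≤ j → ∃ t, a ≤ t ∧ t < a + δ ∧ t ∈ T := by
    intro a ha haj
    by_contra hcon
    push_neg at hcon
    apply window_lemma G hbasic hrank u a
    · exact stateOf_ne_zero_of_stateNonzero G u a (hstates a ha (by omega))
    · intro t ht1 ht2 jl
      rw [hδfin] at ht2
      have htj : t < j := by omega
      have := hcon t ht1 ht2
      rw [hTdef] at this
      simp only [Set.mem_setOf_eq, not_and, not_exists, not_not] at this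
      exact this htj jl
  -- greedy chain
  have claim : ∀ r : ℕ, r + 1 ≤ W → (j ≤ δ * W) ∨
      ∃ (S : Finset ℕ) (t : ℕ), ↑S ⊆ T ∧ S.card = r + 1 ∧ t ∈ S ∧
        (∀ s ∈ S, s ≤ t) ∧ t ≤ r * δ := by
    intro r
    induction r with
    | zero =>
        intro _
        right
        exact ⟨{0}, 0, by simpa using h0T, rfl, Finset.mem_singleton_self 0,
          fun s hs => by simp at hs; omega, by omega⟩
    | succ r ih =>
        intro hr
        rcases ih (by omega) with h | ⟨S, t, hsub, hcard, htS, hmax, htle⟩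
        · exact Or.inl h
        by_cases hfit : t + 1 + δ ≤ j
        · obtain ⟨t', ht'1, ht'2, ht'T⟩ := hwin (t + 1) (by omega) (by omega)
          right
          have htnew : t' ∉ S := fun hmem => by have := hmax t' hmem; omega
          refine ⟨insert t' S, t', ?_, ?_, Finset.mem_insert_self t' S, ?_, ?_⟩
          · intro z hz
            rcases Finset.mem_insert.mp hz with h | h
            · rw [h]; exact ht'T
            · exact hsub h
          · rw [Finset.card_insert_of_notMem htnew, hcard]
          · intro z hz
            rcases Finset.mem_insert.mp hz with h | h
            · omega
            · have := hmax z h; omega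
          · have hrr : (r + 1) * δ = r * δ + δ := by ring
            omega
        · left
          have h1 : j ≤ t + δ := by omega
          have h2 : t + δ ≤ (r + 1) * δ := by
            have : (r + 1) * δ = r * δ + δ := by ring
            omega
          have h3 : (r + 1) * δ ≤ W * δ := Nat.mul_le_mul_right δ (by omega)
          calc j ≤ (r + 1) * δ := by omega
            _ ≤ W * δ := h3
            _ = δ * W := Nat.mul_comm W δ
  have hW1 : 1 ≤ W := by omega
  have hjle : j ≤ δ * W := by
    rcases claim (W - 1) (by omega) with h | ⟨S, t, hsub, hcard, htS, hmax, htle⟩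
    · exact h
    by_cases hfit : t + 1 + δ ≤ j
    · obtain ⟨t', ht'1, ht'2, ht'T⟩ := hwin (t + 1) (by omega) (by omega)
      exfalso
      have htnew : t' ∉ S := fun hmem => by have := hmax t' hmem; omega
      have hsub' : ↑(insert t' S) ⊆ T := by
        intro z hz
        rcases Finset.mem_insert.mp (by exact_mod_cast hz) with h | h
        · rw [h]; exact ht'T
        · exact hsub h
      have := hcardT (insert t' S) hsub'
      rw [Finset.card_insert_of_notMem htnew, hcard] at this
      omega
    · have h1 : j ≤ t + δ := by omega
      have h2 : t + δ ≤ (W - 1) * δ + δ := by omega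
      have h3 : (W - 1) * δ + δ = W * δ := by
        have hww : W - 1 + 1 = W := by omega
        calc (W - 1) * δ + δ = (W - 1 + 1) * δ := by ring
          _ = W * δ := by rw [hww]
      have h4 : W * δ = δ * W := Nat.mul_comm W δ
      omega
  -- final arithmetic
  have ha : n = (n - k) + k := by omega
  set a := n - k with hadef
  have e1 : 6 * n * k = 6 * (a * k) + 6 * (k * k) := by rw [ha]; ring
  have e2 : δ * W = 6 * (a * k) + 4 * (k * k) := by
    rw [hδ2k, hWdef]
    ring
  have e3 : 2 * k ^ 2 = 2 * (k * k) := by ring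
  rw [e1, e3]
  omega
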